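/- Let P be a path on n vertices, k ≥ d+2, and let α and β be two (d,k)-colorings of P each using at most d+1 distinct colors. Then there is a reconfiguration sequence of (d,k)-colorings from α to β where consecutive colorings differ at exactly one vertex. -/

import Mathlib

/-- A (d,k)-coloring of the path on `n` vertices `v_0, …, v_{n-1}`
(distance between `v_i` and `v_j` is `|i - j|`). -/
def IsPathDKColoring (n d k : ℕ) (α : Fin n → Fin k) : Prop :=
  ∀ i j : Fin n, i ≠ j → Nat.dist i.val j.val ≤ d → α i ≠ α j

/-- Two colorings differ at exactly one vertex. -/
def OneStep {n k : ℕ} (α β : Fin n → Fin k) : Prop :=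
  ∃ v : Fin n, α v ≠ β v ∧ ∀ w : Fin n, w ≠ v → α w = β w

def Reach (n d k : ℕ) (α β : Fin n → Fin k) : Prop :=
  ∃ (m : ℕ) (seq : ℕ → Fin n → Fin k),
    seq 0 = α ∧ seq m = β ∧
    (∀ i ≤ m, IsPathDKColoring n d k (seq i)) ∧
    (∀ i < m, OneStep (seq i) (seq (i + 1)))

lemma reach_refl {n d k : ℕ} {α : Fin n → Fin k} (h : IsPathDKColoring n d k α) :
    Reach n d k α α :=
  ⟨0, fun _ => α, rfl, rfl, fun _ _ => h, fun i hi => absurd hi (Nat.not_lt_zero i)⟩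

lemma onestep_symm {n k : ℕ} {α β : Fin n → Fin k} (h : OneStep α β) : OneStep β α := by
  obtain ⟨v, hv, hw⟩ := h
  exact ⟨v, hv.symm, fun w hwv => (hw w hwv).symm⟩

lemma reach_symm {n d k : ℕ} {α β : Fin n → Fin k} (h : Reach n d k α β) :
    Reach n d k β α := by
  obtain ⟨m, s, h0, hm, hp, hs⟩ := h
  refine ⟨m, fun i => s (m - i), by simpa, by simpa using h0, fun i hi => hp _ (by omega), ?_⟩
  intro i hi
  have h1 : m - i - 1 + 1 = m - i := by omega
  have := hs (m - i - 1) (by omega)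
  rw [h1] at this
  simp only
  have h2 : m - (i+1) = m - i - 1 := by omega
  rw [h2]
  exact onestep_symm this

lemma reach_trans {n d k : ℕ} {α β γ : Fin n → Fin k}
    (h₁ : Reach n d k α β) (h₂ : Reach n d k β γ) : Reach n d k α γ := by
  obtain ⟨m₁, s₁, h10, h1m, h1p, h1s⟩ := h₁
  obtain ⟨m₂, s₂, h20, h2m, h2p, h2s⟩ := h₂
  have key : s₂ 0 = s₁ m₁ := by rw [h20, h1m]
  refine ⟨m₁ + m₂, fun i => if i < m₁ then s₁ i else s₂ (i - m₁), ?_, ?_, ?_, ?_⟩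
  · simp only; split
    · exact h10
    · rename_i h; have hm : m₁ = 0 := by omega
      subst hm; rw [key]; exact h10
  · simp only; split
    · omega
    · have : m₁ + m₂ - m₁ = m₂ := by omega
      rw [this]; exact h2m
  · intro i hi; simp only; split
    · exact h1p i (by omega)
    · exact h2p (i - m₁) (by omega)
  · intro i hi; simp only
    by_cases h : i + 1 < m₁
    · simp only [if_pos (by omega : i < m₁), if_pos h]
      exact h1s i (by omega)
    · by_cases h' : i < m₁
      · -- i + 1 = m₁
        have hi1 : i + 1 = m₁ := by omega
        simp only [if_pos h', if_neg h]
        have : i + 1 - m₁ = 0 := by omega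
        rw [this, key, ← hi1]
        exact h1s i (by omega)
      · simp only [if_neg h', if_neg (by omega : ¬ i + 1 < m₁)]
        have : i + 1 - m₁ = (i - m₁) + 1 := by omega
        rw [this]
        exact h2s (i - m₁) (by omega)

lemma reach_single {n d k : ℕ} {α β : Fin n → Fin k} (hα : IsPathDKColoring n d k α)
    (hβ : IsPathDKColoring n d k β) (h : OneStep α β) : Reach n d k α β := by
  refine ⟨1, fun i => if i = 0 then α else β, by simp, by simp, ?_, ?_⟩
  · intro i hi
    by_cases h0 : i = 0 <;> simp [h0, hα, hβ]
  · intro i hi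
    have : i = 0 := by omega
    subst this; simpa using h

def clsF (n d : ℕ) : Fin n → Fin (d+1) :=
  fun i => ⟨i.val % (d+1), Nat.mod_lt _ (Nat.succ_pos d)⟩

/-- The periodic coloring with pattern `σ`. -/
def colP (n d k : ℕ) (σ : Fin (d+1) → Fin k) : Fin n → Fin k :=
  fun i => σ (clsF n d i)

lemma mod_eq_of_close {d : ℕ} {a b : ℕ} (h : a % (d+1) = b % (d+1))
    (hd : Nat.dist a b ≤ d) : a = b := by
  rcases Nat.lt_trichotomy a b with h1 | h1 | h1
  · have hdist : Nat.dist a b = b - a := Nat.dist_eq_sub_of_le (le_of_lt h1)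
    have hz : (b - a) % (d+1) = 0 := Nat.sub_mod_eq_zero_of_mod_eq h.symm
    rw [Nat.mod_eq_of_lt (by omega)] at hz
    omega
  · exact h1
  · have hdist : Nat.dist a b = a - b := Nat.dist_eq_sub_of_le_right (le_of_lt h1)
    have hz : (a - b) % (d+1) = 0 := Nat.sub_mod_eq_zero_of_mod_eq h
    rw [Nat.mod_eq_of_lt (by omega)] at hz
    omega

lemma clsF_ne {n d : ℕ} {i j : Fin n} (hij : i ≠ j) (hdist : Nat.dist i.val j.val ≤ d) :
    clsF n d i ≠ clsF n d j := by
  intro h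
  exact hij (Fin.ext (mod_eq_of_close (congrArg Fin.val h) hdist))

lemma colP_proper (n d k : ℕ) (σ : Fin (d+1) → Fin k) (hσ : Function.Injective σ) :
    IsPathDKColoring n d k (colP n d k σ) := by
  intro i j hij hdist hcol
  exact clsF_ne hij hdist (hσ hcol)

/-- Hybrid coloring during a macro move. -/
def hybF (n d k : ℕ) (σ : Fin (d+1) → Fin k) (r : Fin (d+1)) (b : Fin k) (t : ℕ) :
    Fin n → Fin k :=
  fun i => if i.val < t ∧ clsF n d i = r then b else σ (clsF n d i)

/-- Macro move: recolor the entire residue class `r` to color `b`,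
one vertex at a time. -/
lemma reach_update (n d k : ℕ) (σ : Fin (d+1) → Fin k) (hσ : Function.Injective σ)
    (r : Fin (d+1)) (b : Fin k) (hb : ∀ s, s ≠ r → σ s ≠ b) :
    Reach n d k (colP n d k σ) (colP n d k (Function.update σ r b)) := by
  have hyb0 : hybF n d k σ r b 0 = colP n d k σ := by
    funext i; simp [hybF, colP]
  have hybn : hybF n d k σ r b n = colP n d k (Function.update σ r b) := by
    funext i
    simp only [hybF, colP, Function.update_apply, i.isLt, true_and]
  have hybproper : ∀ t, IsPathDKColoring n d k (hybF n d k σ r b t) := by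
    intro t i j hij hdist
    have hclass : clsF n d i ≠ clsF n d j := clsF_ne hij hdist
    simp only [hybF]
    by_cases h1 : i.val < t ∧ clsF n d i = r <;> by_cases h2 : j.val < t ∧ clsF n d j = r
    · rw [if_pos h1, if_pos h2]; exact absurd (h1.2.trans h2.2.symm) hclass
    · rw [if_pos h1, if_neg h2]
      intro hcon
      exact hb (clsF n d j) (fun he => hclass (h1.2.trans he.symm)) hcon.symm
    · rw [if_neg h1, if_pos h2]
      exact hb (clsF n d i) (fun he => hclass (he.trans h2.2.symm))
    · rw [if_neg h1, if_neg h2]; exact fun hcon => hclass (hσ hcon)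
  have step : ∀ t, Reach n d k (hybF n d k σ r b 0) (hybF n d k σ r b t) := by
    intro t
    induction t with
    | zero => exact reach_refl (hyb0 ▸ colP_proper n d k σ hσ)
    | succ t ih =>
      by_cases hcase : ∃ htn : t < n, clsF n d ⟨t, htn⟩ = r ∧ b ≠ σ r
      · obtain ⟨htn, htr, hbr⟩ := hcase
        refine reach_trans ih (reach_single (hybproper t) (hybproper (t+1)) ?_)
        refine ⟨⟨t, htn⟩, ?_, ?_⟩
        · simp only [hybF]
          rw [if_neg (fun h => absurd h.1 (by simp)), if_pos ⟨by simp, htr⟩, htr]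
          exact fun h => hbr h.symm
        · intro w hw
          simp only [hybF]
          have hwt : w.val ≠ t := fun h => hw (Fin.ext h)
          have hiff : (w.val < t ∧ clsF n d w = r) ↔ (w.val < t + 1 ∧ clsF n d w = r) := by
            constructor
            · rintro ⟨a, c⟩; exact ⟨by omega, c⟩
            · rintro ⟨a, c⟩; exact ⟨by omega, c⟩
          rw [if_congr hiff rfl rfl]
      · have heq : hybF n d k σ r b (t+1) = hybF n d k σ r b t := by
          funext i
          simp only [hybF]
          by_cases hc : clsF n d i = r
          · by_cases h2 : i.val < t
            · rw [if_pos ⟨Nat.lt_succ_of_lt h2, hc⟩, if_pos ⟨h2, hc⟩]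
            · by_cases h3 : i.val < t + 1
              · have hit : i.val = t := by omega
                have hbr : b = σ r := by
                  by_contra hbr
                  refine hcase ⟨hit ▸ i.isLt, ?_, hbr⟩
                  convert hc using 2
                  exact Fin.ext hit.symm
                rw [if_pos ⟨h3, hc⟩, if_neg (fun h => h2 h.1), hc, hbr]
              · rw [if_neg (fun h => h3 h.1), if_neg (fun h => h2 h.1)]
          · rw [if_neg (fun h => hc h.2), if_neg (fun h => hc h.2)]
        rw [heq]; exact ih
  rw [← hyb0, ← hybn]
  exact step n

lemma exists_unused {d k : ℕ} (hk : d + 2 ≤ k) (σ : Fin (d+1) → Fin k) :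
    ∃ c : Fin k, ∀ s, σ s ≠ c := by
  by_contra h
  push_neg at h
  have hsurj : Function.Surjective σ := fun c => by
    obtain ⟨s, hs⟩ := h c; exact ⟨s, hs⟩
  have := Fintype.card_le_of_surjective σ hsurj
  simp only [Fintype.card_fin] at this
  omega

lemma update_inj {A B : Type*} [DecidableEq A] {σ : A → B} (hσ : Function.Injective σ)
    (r : A) (b : B) (hb : ∀ s, s ≠ r → σ s ≠ b) :
    Function.Injective (Function.update σ r b) := by
  intro x y hxy
  rcases eq_or_ne x r with hx | hx <;> rcases eq_or_ne y r with hy | hy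
  · rw [hx, hy]
  · subst hx
    rw [Function.update_self, Function.update_of_ne hy] at hxy
    exact absurd hxy.symm (hb y hy)
  · subst hy
    rw [Function.update_self, Function.update_of_ne hx] at hxy
    exact absurd hxy (hb x hx)
  · rw [Function.update_of_ne hx, Function.update_of_ne hy] at hxy
    exact hσ hxy

lemma reach_patterns (n d k : ℕ) (hk : d + 2 ≤ k) (τ : Fin (d+1) → Fin k)
    (hτ : Function.Injective τ) :
    ∀ (c : ℕ) (σ : Fin (d+1) → Fin k), Function.Injective σ →
      (Finset.univ.filter (fun s => σ s ≠ τ s)).card ≤ c →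
      Reach n d k (colP n d k σ) (colP n d k τ) := by
  intro c
  induction c with
  | zero =>
    intro σ hσ hcard
    have hst : σ = τ := by
      funext s
      by_contra hne
      have hmem : s ∈ Finset.univ.filter (fun s => σ s ≠ τ s) := by simp [hne]
      have := Finset.card_pos.mpr ⟨s, hmem⟩
      omega
    rw [hst]; exact reach_refl (colP_proper _ _ _ _ hτ)
  | succ c ih =>
    intro σ hσ hcard
    by_cases hempty : (Finset.univ.filter (fun s => σ s ≠ τ s)) = ∅
    · exact ih σ hσ (by rw [hempty]; simp)
    · obtain ⟨r, hr⟩ := Finset.nonempty_of_ne_empty hempty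
      have hrne : σ r ≠ τ r := by simpa using (Finset.mem_filter.mp hr).2
      by_cases hfree : ∀ s, s ≠ r → σ s ≠ τ r
      · have hmove := reach_update n d k σ hσ r (τ r) hfree
        have hinj' := update_inj hσ r (τ r) hfree
        have hsub : (Finset.univ.filter (fun s => Function.update σ r (τ r) s ≠ τ s)) ⊆
            (Finset.univ.filter (fun s => σ s ≠ τ s)).erase r := by
          intro s hs
          have hs' : Function.update σ r (τ r) s ≠ τ s := by
            simpa using (Finset.mem_filter.mp hs).2
          have hsr : s ≠ r := by
            rintro rfl
            rw [Function.update_self] at hs'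
            exact hs' rfl
          rw [Function.update_of_ne hsr] at hs'
          exact Finset.mem_erase.mpr ⟨hsr, by simp [hs']⟩
        have hcard' : (Finset.univ.filter
            (fun s => Function.update σ r (τ r) s ≠ τ s)).card ≤ c := by
          have h1 := Finset.card_le_card hsub
          rw [Finset.card_erase_of_mem hr] at h1
          omega
        exact reach_trans hmove (ih _ hinj' hcard')
      · push_neg at hfree
        obtain ⟨s₀, hs₀r, hs₀b⟩ := hfree
        obtain ⟨c₀, hc₀⟩ := exists_unused hk σ
        have h1 : ∀ s, s ≠ s₀ → σ s ≠ c₀ := fun s _ => hc₀ s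
        have hmove1 := reach_update n d k σ hσ s₀ c₀ h1
        have hσ₁ := update_inj hσ s₀ c₀ h1
        have h2 : ∀ s, s ≠ r → Function.update σ s₀ c₀ s ≠ τ r := by
          intro s hs
          rcases eq_or_ne s s₀ with hss | hss
          · subst hss
            rw [Function.update_self]
            exact fun h => hc₀ _ (hs₀b.trans h.symm)
          · rw [Function.update_of_ne hss]
            intro h
            exact hss (hσ (h.trans hs₀b.symm))
        have hmove2 := reach_update n d k _ hσ₁ r (τ r) h2
        have hσ₂ := update_inj hσ₁ r (τ r) h2
        have hsub : (Finset.univ.filter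
            (fun s => Function.update (Function.update σ s₀ c₀) r (τ r) s ≠ τ s)) ⊆
            (Finset.univ.filter (fun s => σ s ≠ τ s)).erase r := by
          intro s hs
          have hs' : Function.update (Function.update σ s₀ c₀) r (τ r) s ≠ τ s := by
            simpa using (Finset.mem_filter.mp hs).2
          have hsr : s ≠ r := by
            rintro rfl
            rw [Function.update_self] at hs'
            exact hs' rfl
          rw [Function.update_of_ne hsr] at hs'
          refine Finset.mem_erase.mpr ⟨hsr, ?_⟩
          rcases eq_or_ne s s₀ with hss | hss
          · subst hss
            have : σ s ≠ τ s := by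
              intro h
              exact hs₀r (hτ (h.symm.trans hs₀b))
            simp [this]
          · rw [Function.update_of_ne hss] at hs'
            simp [hs']
        have hcard' : (Finset.univ.filter
            (fun s => Function.update (Function.update σ s₀ c₀) r (τ r) s ≠ τ s)).card ≤ c := by
          have h1 := Finset.card_le_card hsub
          rw [Finset.card_erase_of_mem hr] at h1
          omega
        exact reach_trans hmove1 (reach_trans hmove2 (ih _ hσ₂ hcard'))

lemma nat_dist_le {a b d : ℕ} (h : a - b + (b - a) ≤ d) : Nat.dist a b ≤ d := by
  simpa [Nat.dist] using h

lemma alpha_period (n d k : ℕ) (α : Fin n → Fin k) (hα : IsPathDKColoring n d k α)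
    (hαc : (Finset.univ.image α).card ≤ d + 1) :
    ∀ (m : ℕ) (hdm : d + 1 ≤ m) (hmn : m < n),
      α ⟨m, hmn⟩ = α ⟨m - (d+1), by omega⟩ := by
  intro m hdm hmn
  set g : ℕ → Fin k := fun t => if h : m - (d+1) + t < n then α ⟨m - (d+1) + t, h⟩
    else α ⟨m, hmn⟩ with hg
  have hglt : ∀ t ≤ d, m - (d+1) + t < n := by intro t ht; omega
  have hgval : ∀ t (ht : t ≤ d), g t = α ⟨m - (d+1) + t, hglt t ht⟩ := by
    intro t ht; simp only [hg, dif_pos (hglt t ht)]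
  have hinj : Set.InjOn g ↑(Finset.range (d+1)) := by
    intro a ha b hb hab
    simp only [Finset.coe_range, Set.mem_Iio] at ha hb
    by_contra hne
    rw [hgval a (by omega), hgval b (by omega)] at hab
    refine hα _ _ (fun h => hne ?_) (nat_dist_le ?_) hab
    · have := congrArg Fin.val h
      simp only [Fin.val_mk] at this
      omega
    · simp only [Fin.val_mk]
      omega
  have hTsub : (Finset.range (d+1)).image g ⊆ Finset.univ.image α := by
    intro x hx
    obtain ⟨t, _, rfl⟩ := Finset.mem_image.mp hx
    simp only [hg]
    split
    · exact Finset.mem_image_of_mem α (Finset.mem_univ _)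
    · exact Finset.mem_image_of_mem α (Finset.mem_univ _)
  have hTcard : ((Finset.range (d+1)).image g).card = d + 1 := by
    rw [Finset.card_image_of_injOn hinj, Finset.card_range]
  have hTeq : (Finset.range (d+1)).image g = Finset.univ.image α :=
    Finset.eq_of_subset_of_card_le hTsub (by omega)
  have hmem : α ⟨m, hmn⟩ ∈ (Finset.range (d+1)).image g := by
    rw [hTeq]; exact Finset.mem_image_of_mem α (Finset.mem_univ _)
  obtain ⟨t, ht, hgt⟩ := Finset.mem_image.mp hmem
  rw [Finset.mem_range] at ht
  rw [hgval t (by omega)] at hgt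
  rcases Nat.eq_zero_or_pos t with h0 | h0
  · subst h0
    rw [← hgt]
    congr 1
  · exfalso
    refine hα _ _ (fun h => ?_) (nat_dist_le (by simp only [Fin.val_mk]; omega)) hgt
    have := congrArg Fin.val h
    simp only [Fin.val_mk] at this
    omega

lemma alpha_mod (n d k : ℕ) (α : Fin n → Fin k) (hα : IsPathDKColoring n d k α)
    (hαc : (Finset.univ.image α).card ≤ d + 1) :
    ∀ (m : ℕ) (hmn : m < n),
      α ⟨m, hmn⟩ = α ⟨m % (d+1), lt_of_le_of_lt (Nat.mod_le _ _) hmn⟩ := by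
  intro m
  induction m using Nat.strong_induction_on with
  | _ m ih =>
    intro hmn
    by_cases hm : m < d + 1
    · congr 1
      exact Fin.ext (Nat.mod_eq_of_lt hm).symm
    · rw [alpha_period n d k α hα hαc m (by omega) hmn]
      rw [ih (m - (d+1)) (by omega) (by omega)]
      congr 1
      apply Fin.ext
      show (m - (d+1)) % (d+1) = m % (d+1)
      conv_rhs => rw [show m = (m - (d+1)) + (d+1) by omega]
      rw [Nat.add_mod_right]

lemma exists_pattern (n d k : ℕ) (hk : d + 2 ≤ k) (α : Fin n → Fin k)
    (hα : IsPathDKColoring n d k α) (hαc : (Finset.univ.image α).card ≤ d + 1) :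
    ∃ σ : Fin (d+1) → Fin k, Function.Injective σ ∧ colP n d k σ = α := by
  have himg : (Finset.univ.image α).card ≤ n := le_trans Finset.card_image_le (by simp)
  have hunused : (d + 1) - n ≤ (Finset.univ \ Finset.univ.image α).card := by
    rw [Finset.card_sdiff_of_subset (Finset.subset_univ _), Finset.card_univ, Fintype.card_fin]
    omega
  obtain ⟨V, hVsub, hVcard⟩ := Finset.exists_subset_card_eq hunused
  set f := V.orderIsoOfFin hVcard with hf
  refine ⟨fun s => if h : s.val < n then α ⟨s.val, h⟩
    else (f ⟨s.val - n, by omega⟩ : Fin k), ?_, ?_⟩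
  · intro x y hxy
    have hV : ∀ (z : Fin ((d+1) - n)), (f z : Fin k) ∉ Finset.univ.image α := by
      intro z hz
      have hmem : (f z : Fin k) ∈ Finset.univ \ Finset.univ.image α := hVsub (f z).2
      exact (Finset.mem_sdiff.mp hmem).2 hz
    simp only at hxy
    by_cases hx : x.val < n <;> by_cases hy : y.val < n
    · rw [dif_pos hx, dif_pos hy] at hxy
      by_contra hne
      refine hα ⟨x.val, hx⟩ ⟨y.val, hy⟩ (fun h => hne (Fin.ext (by
        have := congrArg Fin.val h; simpa using this))) ?_ hxy
      exact nat_dist_le (by simp only [Fin.val_mk]; omega)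
    · rw [dif_pos hx, dif_neg hy] at hxy
      exact absurd (hxy ▸ Finset.mem_image_of_mem α (Finset.mem_univ _))
        (hV ⟨y.val - n, by omega⟩)
    · rw [dif_neg hx, dif_pos hy] at hxy
      exact absurd (hxy.symm ▸ Finset.mem_image_of_mem α (Finset.mem_univ _))
        (hV ⟨x.val - n, by omega⟩)
    · rw [dif_neg hx, dif_neg hy] at hxy
      have h1 := f.injective (Subtype.ext hxy)
      have h2 := congrArg Fin.val h1
      simp only at h2
      exact Fin.ext (by omega)
  · funext i
    simp only [colP, clsF]
    have hlt : i.val % (d+1) < n := lt_of_le_of_lt (Nat.mod_le _ _) i.isLt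
    exact (dif_pos hlt).trans (alpha_mod n d k α hα hαc i.val i.isLt).symm

theorem path_reconf_between_compact_colorings (n d k : ℕ) (hd : 1 ≤ d) (hk : d + 2 ≤ k)
    (α β : Fin n → Fin k)
    (hα : IsPathDKColoring n d k α) (hβ : IsPathDKColoring n d k β)
    (hαc : (Finset.univ.image α).card ≤ d + 1)
    (hβc : (Finset.univ.image β).card ≤ d + 1) :
    ∃ (m : ℕ) (seq : ℕ → Fin n → Fin k),
      seq 0 = α ∧ seq m = β ∧
      (∀ i ≤ m, IsPathDKColoring n d k (seq i)) ∧
      (∀ i < m, OneStep (seq i) (seq (i + 1))) := by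
  obtain ⟨σα, hσα, hcolα⟩ := exists_pattern n d k hk α hα hαc
  obtain ⟨σβ, hσβ, hcolβ⟩ := exists_pattern n d k hk β hβ hβc
  have : Reach n d k α β := by
    rw [← hcolα, ← hcolβ]
    exact reach_patterns n d k hk σβ hσβ _ σα hσα le_rfl
  exact this
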